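/- Let (s_t)_{t≥0} be a semigroup of isometries on a Hilbert C*-module E and set E_u := ⋂_{t≥0} s_t E. Then ⋂_{t≥0} s_t(E_u^⊥) = {0}; that is, E_u^⊥ reduces s to a completely nonunitary semigroup. -/

import Mathlib

open scoped RightActions
open MeasureTheory Filter Topology

noncomputable section

/-- The December 2024 Mathlib `CStarModule` (right `Aᵐᵒᵖ`-action), whose meaning Mathlib has
since changed to a left `A`-action; restated here with its old meaning. -/
class CStarModuleOld (A : outParam <| Type*) (E : Type*) [NonUnitalSemiring A] [StarRing A]
    [Module ℂ A] [AddCommGroup E] [Module ℂ E] [PartialOrder A] [SMul Aᵐᵒᵖ E] [Norm A] [Norm E]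
    extends Inner A E where
  inner_add_right {x} {y} {z} : inner x (y + z) = inner x y + inner x z
  inner_self_nonneg {x} : 0 ≤ inner x x
  inner_self {x} : inner x x = 0 ↔ x = 0
  inner_op_smul_right {a : A} {x y : E} : inner x (y <• a) = inner x y * a
  inner_smul_right_complex {z : ℂ} {x} {y} : inner x (z • y) = z • inner x y
  star_inner x y : star (inner x y) = inner y x
  norm_eq_sqrt_norm_inner_self x : ‖x‖ = √‖inner x x‖

variable {A E : Type*} [CStarAlgebra A] [PartialOrder A] [StarOrderedRing A]
  [NormedAddCommGroup E] [NormedSpace ℂ E] [SMul Aᵐᵒᵖ E] [CStarModuleOld A E]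

local notation "⟪" x ", " y "⟫" => (inner A x y : A)

variable (A) in
/-- Orthogonal complement of a subset of a Hilbert C*-module. -/
def ortho (F : Set E) : Set E := {x : E | ∀ y ∈ F, ⟪y, x⟫ = 0}

theorem orthocomplement_of_unitary_part_completely_nonunitary
    [CompleteSpace E]
    (s : ℝ → E →ₗ[ℂ] E)
    (hs0 : s 0 = LinearMap.id)
    (hsg : ∀ r t : ℝ, 0 ≤ r → 0 ≤ t → s (r + t) = (s r).comp (s t))
    (hiso : ∀ t : ℝ, 0 ≤ t → ∀ x y : E, ⟪s t x, s t y⟫ = ⟪x, y⟫) :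
    (⋂ t ∈ Set.Ici (0 : ℝ),
        s t '' ortho A (⋂ r ∈ Set.Ici (0 : ℝ), Set.range (s r))) = {0} := by
  ext x
  simp only [Set.mem_iInter, Set.mem_singleton_iff]
  constructor
  · intro hx
    -- x ∈ F via t = 0
    have hxF : x ∈ ortho A (⋂ r ∈ Set.Ici (0 : ℝ), Set.range (s r)) := by
      obtain ⟨y, hy, hxy⟩ := hx 0 (Set.mem_Ici.mpr le_rfl)
      rw [hs0, LinearMap.id_apply] at hxy
      exact hxy ▸ hy
    -- x ∈ E_u
    have hxU : x ∈ ⋂ r ∈ Set.Ici (0 : ℝ), Set.range (s r) := by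
      simp only [Set.mem_iInter]
      intro r hr
      obtain ⟨y, _, hxy⟩ := hx r (Set.mem_Ici.mpr hr)
      exact ⟨y, hxy⟩
    have : ⟪x, x⟫ = 0 := hxF x hxU
    exact CStarModuleOld.inner_self.mp this
  · rintro rfl
    intro t ht
    exact ⟨0, fun y _ => by
        have h := CStarModuleOld.inner_add_right (A := A) (x := y) (y := (0 : E)) (z := 0)
        simpa using h, by simp⟩
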